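/- Let R = C[∂]L ⊕ C[∂]W be the Heisenberg-Virasoro Lie conformal algebra and g(∂) ∈ C[∂]. Then the λ-products L_λ L = g(-λ)λW and L_λ W = W_λ L = W_λ W = 0 (extended by conformal sesquilinearity) define a left-symmetric conformal algebra structure on R. -/

import Mathlib

open Finsupp

noncomputable section

/-- Coefficient of `λ^k` of the substitution `μ ↦ -λ-∂` applied to the polynomial
`Σₙ μ^n • (f n)` with coefficients in `A` (with `∂` acting on the coefficients). -/
def csubst {A : Type} [AddCommGroup A] [Module ℂ A]
    (D : Module.End ℂ A) (f : ℕ →₀ A) (k : ℕ) : A :=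
  f.sum fun n c => ((-1 : ℂ) ^ n * (n.choose k : ℂ)) • (D ^ (n - k)) c

/-- Coefficient of `λ^n μ^m` of `(a_λ b)_{λ+μ} c`, for a λ-product `m₁` on `A`
and a λ-action `m₂` of `A` on `V`. -/
def comp2 {A V : Type} [AddCommGroup A] [Module ℂ A] [AddCommGroup V] [Module ℂ V]
    (m₁ : A →ₗ[ℂ] A →ₗ[ℂ] (ℕ →₀ A)) (m₂ : A →ₗ[ℂ] V →ₗ[ℂ] (ℕ →₀ V))
    (a b : A) (c : V) (n m : ℕ) : V :=
  ∑ i ∈ Finset.range (n + 1),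
    (((m + n - i).choose (n - i) : ℕ) : ℂ) • m₂ (m₁ a b i) c (m + n - i)

/-- A conformal algebra: a `ℂ[∂]`-module with a sesquilinear λ-product,
encoded coefficientwise: `mul a b n` is the coefficient of `λ^n` in `a_λ b`. -/
structure ConfAlg (A : Type) [AddCommGroup A] [Module ℂ A] where
  D : Module.End ℂ A
  mul : A →ₗ[ℂ] A →ₗ[ℂ] (ℕ →₀ A)
  sesq_left_zero : ∀ a b, mul (D a) b 0 = 0
  sesq_left : ∀ a b n, mul (D a) b (n + 1) = - mul a b n
  sesq_right_zero : ∀ a b, mul a (D b) 0 = D (mul a b 0)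
  sesq_right : ∀ a b n, mul a (D b) (n + 1) = D (mul a b (n + 1)) + mul a b n

/-- A Lie conformal algebra: skew-symmetry `[a_λ b] = -[b_{-λ-∂} a]` and the
Jacobi identity `[a_λ[b_μ c]] = [[a_λ b]_{λ+μ} c] + [b_μ[a_λ c]]`, coefficientwise. -/
structure LieConfAlg (A : Type) [AddCommGroup A] [Module ℂ A] extends ConfAlg A where
  skew : ∀ a b k, mul a b k = - csubst D (mul b a) k
  jacobi : ∀ a b c n m,
    mul a (mul b c m) n = comp2 mul mul a b c n m + mul b (mul a c n) m

/-- A left-symmetric conformal algebra: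
`(a_λ b)_{λ+μ} c - a_λ(b_μ c) = (b_μ a)_{λ+μ} c - b_μ(a_λ c)`, coefficientwise. -/
structure LSConfAlg (A : Type) [AddCommGroup A] [Module ℂ A] extends ConfAlg A where
  lsym : ∀ a b c n m,
    comp2 mul mul a b c n m - mul a (mul b c m) n
      = comp2 mul mul b a c m n - mul b (mul a c n) m

/-- The carrier `ℂ[∂]L ⊕ ℂ[∂]W`, modelled as `ℕ →₀ (ℂ × ℂ)`. -/
abbrev HV : Type := ℕ →₀ (ℂ × ℂ)

/-- The generator `L`. -/
def HVL : HV := Finsupp.single 0 ((1 : ℂ), (0 : ℂ))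

/-- The generator `W`. -/
def HVW : HV := Finsupp.single 0 ((0 : ℂ), (1 : ℂ))

namespace HVaux

/-- ∂ on HV -/
def DHV : HV →ₗ[ℂ] HV := Finsupp.lmapDomain (ℂ × ℂ) ℂ (· + 1)

/-- multiplication by λ on λ-expansions -/
def shiftL : (ℕ →₀ HV) →ₗ[ℂ] (ℕ →₀ HV) := Finsupp.lmapDomain HV ℂ (· + 1)

/-- ∂ applied coefficientwise -/
def Dmap : (ℕ →₀ HV) →ₗ[ℂ] (ℕ →₀ HV) := Finsupp.mapRange.linearMap DHV

def shiftC : (ℕ →₀ ℂ) →ₗ[ℂ] (ℕ →₀ ℂ) := Finsupp.lmapDomain ℂ ℂ (· + 1)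

/-- coefficient of λ^k in λ g(-λ) -/
def q (g : Polynomial ℂ) : ℕ → ℂ
  | 0 => 0
  | k+1 => (-1:ℂ)^k * g.coeff k

/-- λ-expansion of L_λ L = λ g(-λ) W -/
def G0 (g : Polynomial ℂ) : ℕ →₀ HV :=
  Finsupp.onFinset (g.support.image (· + 1))
    (fun k => Finsupp.single 0 ((0:ℂ), q g k))
    (by
      intro k hk
      match k with
      | 0 => simp [q] at hk
      | k+1 =>
        simp only [Finset.mem_image]
        refine ⟨k, ?_, rfl⟩
        simp only [q] at hk
        by_contra h
        simp only [Polynomial.mem_support_iff, not_not] at h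
        simp [h] at hk)

def Gn (g : Polynomial ℂ) (n : ℕ) : ℕ →₀ HV := ((Dmap + shiftL)^n) (G0 g)

/-- λ-expansion of (∂^n L)_λ (∂^{n'} L) -/
def F (g : Polynomial ℂ) (n n' : ℕ) : ℕ →₀ HV :=
  ((-1:ℂ)^n) • ((shiftL^n) (Gn g n'))

def B (g : Polynomial ℂ) : (ℕ →₀ ℂ) →ₗ[ℂ] (ℕ →₀ ℂ) →ₗ[ℂ] (ℕ →₀ HV) :=
  Finsupp.lsum ℂ fun n => LinearMap.toSpanSingleton ℂ _
    (Finsupp.lsum ℂ fun n' => LinearMap.toSpanSingleton ℂ _ (F g n n'))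

def φ : HV →ₗ[ℂ] (ℕ →₀ ℂ) := Finsupp.mapRange.linearMap (LinearMap.fst ℂ ℂ ℂ)

def mulHV (g : Polynomial ℂ) : HV →ₗ[ℂ] HV →ₗ[ℂ] (ℕ →₀ HV) :=
  ((B g).comp φ).compl₂ φ

lemma mulHV_apply (g : Polynomial ℂ) (a b : HV) : mulHV g a b = B g (φ a) (φ b) := rfl

lemma DHV_single (n : ℕ) (v : ℂ × ℂ) : DHV (Finsupp.single n v) = Finsupp.single (n+1) v := by
  simp [DHV, Finsupp.mapDomain_single]

lemma shiftL_single (n : ℕ) (v : HV) : shiftL (Finsupp.single n v) = Finsupp.single (n+1) v := by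
  simp [shiftL, Finsupp.mapDomain_single]

lemma Dmap_single (n : ℕ) (v : HV) : Dmap (Finsupp.single n v) = Finsupp.single n (DHV v) := by
  simp [Dmap]

lemma shiftC_single (n : ℕ) (c : ℂ) : shiftC (Finsupp.single n c) = Finsupp.single (n+1) c := by
  simp [shiftC, Finsupp.mapDomain_single]

lemma φ_single (n : ℕ) (v : ℂ × ℂ) : φ (Finsupp.single n v) = Finsupp.single n v.1 := by
  simp [φ]

lemma shiftL_Dmap (x : ℕ →₀ HV) : shiftL (Dmap x) = Dmap (shiftL x) := by
  have : shiftL.comp Dmap = Dmap.comp shiftL := by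
    apply Finsupp.lhom_ext
    intro k v
    simp [shiftL_single, Dmap_single]
  exact LinearMap.congr_fun this x

lemma shiftL_pow_Dmap (n : ℕ) (x : ℕ →₀ HV) :
    (shiftL^n) (Dmap x) = Dmap ((shiftL^n) x) := by
  induction n generalizing x with
  | zero => simp
  | succ n ih =>
    rw [pow_succ, Module.End.mul_apply, Module.End.mul_apply, shiftL_Dmap, ih]

lemma shiftL_pow_shiftL (n : ℕ) (x : ℕ →₀ HV) :
    (shiftL^n) (shiftL x) = shiftL ((shiftL^n) x) := by
  rw [← Module.End.mul_apply, ← Module.End.mul_apply, ← pow_succ, ← pow_succ']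

lemma F_succ_left (g : Polynomial ℂ) (n n' : ℕ) :
    F g (n+1) n' = - shiftL (F g n n') := by
  simp only [F, pow_succ', Module.End.mul_apply, map_smul]
  module

lemma F_succ_right (g : Polynomial ℂ) (n n' : ℕ) :
    F g n (n'+1) = Dmap (F g n n') + shiftL (F g n n') := by
  simp only [F, Gn, pow_succ', Module.End.mul_apply, LinearMap.add_apply, map_add,
    shiftL_pow_Dmap, shiftL_pow_shiftL, map_smul]
  module

lemma B_single (g : Polynomial ℂ) (n n' : ℕ) (c c' : ℂ) :
    B g (Finsupp.single n c) (Finsupp.single n' c') = (c * c') • F g n n' := by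
  simp [B, Finsupp.lsum_single, LinearMap.toSpanSingleton_apply, smul_smul]


lemma φ_DHV (v : HV) : φ (DHV v) = shiftC (φ v) := by
  have : φ.comp DHV = shiftC.comp φ := by
    apply Finsupp.lhom_ext
    intro n x
    simp [DHV_single, φ_single, shiftC_single]
  exact LinearMap.congr_fun this v

lemma φ_HVW_zero : φ (Finsupp.single 0 ((0:ℂ), (1:ℂ))) = 0 := by
  simp [φ_single]

lemma B_shift_left (g : Polynomial ℂ) (u v : ℕ →₀ ℂ) :
    B g (shiftC u) v = - shiftL (B g u v) := by
  induction u using Finsupp.induction_linear with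
  | zero => simp only [map_zero, LinearMap.zero_apply]; module
  | add f₁ f₂ h₁ h₂ => simp only [map_add, LinearMap.add_apply, h₁, h₂]; module
  | single n c =>
    induction v using Finsupp.induction_linear with
    | zero => simp only [map_zero]; module
    | add f₁ f₂ h₁ h₂ => simp only [map_add, h₁, h₂]; module
    | single n' c' =>
      rw [shiftC_single, B_single, B_single, F_succ_left, map_smul]
      module

lemma B_shift_right (g : Polynomial ℂ) (u v : ℕ →₀ ℂ) :
    B g u (shiftC v) = Dmap (B g u v) + shiftL (B g u v) := by
  induction u using Finsupp.induction_linear with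
  | zero => simp only [map_zero, LinearMap.zero_apply]; module
  | add f₁ f₂ h₁ h₂ => simp only [map_add, LinearMap.add_apply, h₁, h₂]; module
  | single n c =>
    induction v using Finsupp.induction_linear with
    | zero => simp only [map_zero]; module
    | add f₁ f₂ h₁ h₂ => simp only [map_add, h₁, h₂]; module
    | single n' c' =>
      rw [shiftC_single, B_single, B_single, F_succ_right, map_smul, map_smul]
      module

lemma φ_G0 (g : Polynomial ℂ) (k : ℕ) : φ (G0 g k) = 0 := by
  show φ (Finsupp.single 0 ((0:ℂ), q g k)) = 0
  simp [φ_single]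

lemma φ_shiftL (y : ℕ →₀ HV) (h : ∀ k, φ (y k) = 0) (k : ℕ) : φ (shiftL y k) = 0 := by
  show φ (Finsupp.mapDomain (· + 1) y k) = 0
  match k with
  | 0 =>
    rw [Finsupp.mapDomain_notin_range]
    · simp
    · rintro ⟨m, hm⟩; simp at hm
  | k+1 =>
    rw [show k + 1 = (fun x => x + 1) k from rfl,
      Finsupp.mapDomain_apply (add_left_injective 1)]
    exact h k

lemma φ_Dmap (y : ℕ →₀ HV) (h : ∀ k, φ (y k) = 0) (k : ℕ) : φ (Dmap y k) = 0 := by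
  have : Dmap y k = DHV (y k) := by simp [Dmap]
  rw [this, φ_DHV, h k, map_zero]

lemma φ_Gn (g : Polynomial ℂ) (n : ℕ) : ∀ k, φ (Gn g n k) = 0 := by
  induction n with
  | zero => intro k; exact φ_G0 g k
  | succ n ih =>
    intro k
    have : Gn g (n+1) = Dmap (Gn g n) + shiftL (Gn g n) := by
      simp [Gn, pow_succ', Module.End.mul_apply]
    rw [this, Finsupp.add_apply, map_add, φ_Dmap _ ih k, φ_shiftL _ ih k, add_zero]

lemma φ_shiftL_pow (n : ℕ) (y : ℕ →₀ HV) (h : ∀ k, φ (y k) = 0) :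
    ∀ k, φ ((shiftL^n) y k) = 0 := by
  induction n generalizing y with
  | zero => simpa using h
  | succ n ih =>
    intro k
    rw [pow_succ, Module.End.mul_apply]
    exact ih (shiftL y) (φ_shiftL y h) k

lemma φ_F (g : Polynomial ℂ) (n n' k : ℕ) : φ (F g n n' k) = 0 := by
  show φ ((((-1:ℂ)^n) • ((shiftL^n) (Gn g n'))) k) = 0
  rw [Finsupp.smul_apply, map_smul, φ_shiftL_pow n _ (φ_Gn g n') k, smul_zero]

lemma φ_mul (g : Polynomial ℂ) (a b : HV) (k : ℕ) : φ (mulHV g a b k) = 0 := by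
  rw [mulHV_apply]
  generalize φ a = u
  generalize φ b = v
  induction u using Finsupp.induction_linear with
  | zero => simp
  | add f₁ f₂ h₁ h₂ => simp [map_add, Finsupp.add_apply, h₁, h₂]
  | single n c =>
    induction v using Finsupp.induction_linear with
    | zero => simp
    | add f₁ f₂ h₁ h₂ => simp [map_add, Finsupp.add_apply, h₁, h₂]
    | single n' c' =>
      rw [B_single, Finsupp.smul_apply, map_smul, φ_F, smul_zero]

lemma mul_right_zero (g : Polynomial ℂ) (a b : HV) (h : φ b = 0) : mulHV g a b = 0 := by
  rw [mulHV_apply, h, map_zero]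

lemma mul_left_zero (g : Polynomial ℂ) (a b : HV) (h : φ a = 0) : mulHV g a b = 0 := by
  rw [mulHV_apply, h, map_zero, LinearMap.zero_apply]


lemma mul_D_left (g : Polynomial ℂ) (a b : HV) :
    mulHV g (DHV a) b = - shiftL (mulHV g a b) := by
  rw [mulHV_apply, φ_DHV, B_shift_left, mulHV_apply]

lemma mul_D_right (g : Polynomial ℂ) (a b : HV) :
    mulHV g a (DHV b) = Dmap (mulHV g a b) + shiftL (mulHV g a b) := by
  rw [mulHV_apply, φ_DHV, B_shift_right, mulHV_apply]

lemma shiftL_apply_zero (f : ℕ →₀ HV) : shiftL f 0 = 0 := by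
  show Finsupp.mapDomain (· + 1) f 0 = 0
  rw [Finsupp.mapDomain_notin_range]
  rintro ⟨m, hm⟩; simp at hm

lemma shiftL_apply_succ (f : ℕ →₀ HV) (n : ℕ) : shiftL f (n+1) = f n := by
  show Finsupp.mapDomain (· + 1) f (n+1) = f n
  rw [show n + 1 = (fun x => x + 1) n from rfl,
    Finsupp.mapDomain_apply (add_left_injective 1)]

lemma Dmap_apply (f : ℕ →₀ HV) (k : ℕ) : Dmap f k = DHV (f k) := by
  simp [Dmap]

end HVaux

namespace HVaux


lemma mul_LL (g : Polynomial ℂ) : mulHV g HVL HVL = G0 g := by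
  rw [mulHV_apply]
  rw [show φ HVL = Finsupp.single 0 (1:ℂ) by simp [HVL, φ_single]]
  rw [B_single]
  simp only [F, Gn, pow_zero, Module.End.one_apply, one_mul]
  module

lemma G0_zero (g : Polynomial ℂ) : G0 g 0 = 0 := by
  show Finsupp.single 0 ((0:ℂ), q g 0) = 0
  simp only [q]
  rw [show ((0:ℂ), (0:ℂ)) = (0 : ℂ × ℂ) from rfl, Finsupp.single_zero]

lemma G0_succ (g : Polynomial ℂ) (k : ℕ) :
    G0 g (k+1) = Finsupp.single 0 ((0:ℂ), (-1:ℂ)^k * g.coeff k) := rfl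

lemma φ_HVW : φ HVW = 0 := by simp [HVW, φ_single]

end HVaux

namespace HVaux

def Sg (g : Polynomial ℂ) : LSConfAlg HV where
  D := DHV
  mul := mulHV g
  sesq_left_zero a b := by
    rw [mul_D_left, Finsupp.neg_apply, shiftL_apply_zero, neg_zero]
  sesq_left a b n := by
    rw [mul_D_left, Finsupp.neg_apply, shiftL_apply_succ]
  sesq_right_zero a b := by
    rw [mul_D_right, Finsupp.add_apply, Dmap_apply, shiftL_apply_zero, add_zero]
  sesq_right a b n := by
    rw [mul_D_right, Finsupp.add_apply, Dmap_apply, shiftL_apply_succ]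
  lsym a b c n m := by
    have key : ∀ (x y : HV) (n m : ℕ), comp2 (mulHV g) (mulHV g) x y c n m = 0 := by
      intro x y n m
      unfold comp2
      refine Finset.sum_eq_zero fun i _ => ?_
      rw [mul_left_zero g _ c (φ_mul g x y i)]
      simp
    have key2 : ∀ (x y : HV) (n m : ℕ), mulHV g x (mulHV g y c m) n = 0 := by
      intro x y n m
      rw [mul_right_zero g x _ (φ_mul g y c m)]
      simp
    rw [key, key, key2, key2]

end HVaux

/-- for any `g(∂) ∈ ℂ[∂]`, the products `L_λ L = g(-λ)λ W` and
`L_λ W = W_λ L = W_λ W = 0` define a left-symmetric conformal algebra structure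
on `ℂ[∂]L ⊕ ℂ[∂]W`. -/
theorem heisenberg_virasoro_left_symmetric_two (g : Polynomial ℂ) :
    ∃ S : LSConfAlg HV,
      (∀ (n : ℕ) (v : ℂ × ℂ), S.D (Finsupp.single n v) = Finsupp.single (n + 1) v) ∧
      (S.mul HVL HVL 0 = 0) ∧
      (∀ k : ℕ, S.mul HVL HVL (k + 1)
          = Finsupp.single 0 ((0 : ℂ), (-1 : ℂ) ^ k * g.coeff k)) ∧
      (∀ k : ℕ, S.mul HVL HVW k = 0) ∧
      (∀ k : ℕ, S.mul HVW HVL k = 0) ∧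
      (∀ k : ℕ, S.mul HVW HVW k = 0) := by
  refine ⟨HVaux.Sg g, fun n v => HVaux.DHV_single n v, ?_, ?_, ?_, ?_, ?_⟩
  · show HVaux.mulHV g HVL HVL 0 = 0
    rw [HVaux.mul_LL, HVaux.G0_zero]
  · intro k
    show HVaux.mulHV g HVL HVL (k+1) = _
    rw [HVaux.mul_LL]
    exact HVaux.G0_succ g k
  · intro k
    show HVaux.mulHV g HVL HVW k = 0
    rw [HVaux.mul_right_zero g HVL HVW HVaux.φ_HVW]
    simp
  · intro k
    show HVaux.mulHV g HVW HVL k = 0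
    rw [HVaux.mul_left_zero g HVW HVL HVaux.φ_HVW]
    simp
  · intro k
    show HVaux.mulHV g HVW HVW k = 0
    rw [HVaux.mul_left_zero g HVW HVW HVaux.φ_HVW]
    simp
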